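/- Let n, k be integers with 2 ≤ 2k < n and δ ∈ (-(n-2k)/(2k), (n-2k)/(2k)). Suppose w : ℝ × S^{n-1} → ℝ is a C² solution of ∂²_t w + (n-2k+1)/(n-1) Δ_θ w - (n-2k)²/(2k) w = 0 on all of ℝ × S^{n-1} satisfying |w(t,θ)| ≤ C (cosh t)^{-δ} for some constant C > 0. Then w ≡ 0. -/

import Mathlib

open Filter Real

lemma exp_decay_tendsto (K b : ℝ) (hb : 0 < b) :
    Tendsto (fun t : ℝ => K * Real.exp (-(b * t))) atTop (nhds 0) := by
  have h1 : Tendsto (fun t : ℝ => b * t) atTop atTop :=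
    Tendsto.const_mul_atTop hb tendsto_id
  have h2 : Tendsto (fun t : ℝ => Real.exp (-(b * t))) atTop (nhds 0) :=
    Real.tendsto_exp_neg_atTop_nhds_zero.comp h1
  simpa using h2.const_mul K

lemma ode_zero (ν a K : ℝ) (hν : 0 < ν) (ha : 0 ≤ a) (haν : a < ν)
    (f : ℝ → ℝ) (hf1 : Differentiable ℝ f) (hf2 : Differentiable ℝ (deriv f))
    (hode : ∀ t, deriv (deriv f) t = ν ^ 2 * f t)
    (hbd : ∀ t, |f t| ≤ K * Real.exp (a * |t|)) :
    ∀ t, f t = 0 := by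
  set A := deriv f 0 + ν * f 0 with hA
  have key1 : ∀ t, HasDerivAt (fun s => Real.exp (-(ν * s)) * (deriv f s + ν * f s)) 0 t := by
    intro t
    have he : HasDerivAt (fun s : ℝ => Real.exp (-(ν * s))) (Real.exp (-(ν * t)) * (-ν)) t := by
      have h0 : HasDerivAt (fun s : ℝ => -(ν * s)) (-ν) t := by
        exact (((hasDerivAt_id t).const_mul ν).neg).congr_deriv (by simp)
      exact h0.exp
    have hd : HasDerivAt (fun s => deriv f s + ν * f s) (ν ^ 2 * f t + ν * deriv f t) t := by
      have h1 : HasDerivAt (deriv f) (ν ^ 2 * f t) t := by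
        simpa [hode t] using (hf2 t).hasDerivAt
      have h2 : HasDerivAt (fun s => ν * f s) (ν * deriv f t) t :=
        ((hf1 t).hasDerivAt).const_mul ν
      exact h1.add h2
    have := he.mul hd
    refine this.congr_deriv (Eq.symm ?_)
    ring
  have hg : ∀ t, deriv f t + ν * f t = A * Real.exp (ν * t) := by
    intro t
    have hc : Real.exp (-(ν * t)) * (deriv f t + ν * f t)
        = Real.exp (-(ν * 0)) * (deriv f 0 + ν * f 0) :=
      is_const_of_deriv_eq_zero (fun x => (key1 x).differentiableAt)
        (fun x => (key1 x).deriv) t 0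
    rw [show -(ν * (0:ℝ)) = 0 by ring, Real.exp_zero, one_mul, Real.exp_neg] at hc
    have hx := Real.exp_ne_zero (ν * t)
    field_simp at hc
    rw [hA]; linarith
  have key2 : ∀ t, HasDerivAt
      (fun s => Real.exp (ν * s) * f s - A / (2 * ν) * Real.exp (2 * ν * s)) 0 t := by
    intro t
    have he : HasDerivAt (fun s : ℝ => Real.exp (ν * s)) (Real.exp (ν * t) * ν) t := by
      have h0 : HasDerivAt (fun s : ℝ => ν * s) ν t := by
        simpa using (hasDerivAt_id t).const_mul ν
      exact h0.exp
    have he2 : HasDerivAt (fun s : ℝ => A / (2 * ν) * Real.exp (2 * ν * s))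
        (A / (2 * ν) * (Real.exp (2 * ν * t) * (2 * ν))) t := by
      have h0 : HasDerivAt (fun s : ℝ => 2 * ν * s) (2 * ν) t := by
        simpa using (hasDerivAt_id t).const_mul (2 * ν)
      exact (h0.exp).const_mul _
    have hcomb := (he.mul (hf1 t).hasDerivAt).sub he2
    refine hcomb.congr_deriv (Eq.symm ?_)
    have h := hg t
    have h' : deriv f t = A * Real.exp (ν * t) - ν * f t := by linarith
    rw [h']
    have hee : Real.exp (ν * t) * Real.exp (ν * t) = Real.exp (2 * ν * t) := by
      rw [← Real.exp_add]; ring_nf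
    have hν' : (2 * ν) ≠ 0 := by positivity
    field_simp
    rw [show ν * t * 2 = 2 * ν * t by ring]
    linear_combination (-A) * hee
  set c2 := A / (2 * ν) with hc2def
  set c1 := f 0 - c2 with hc1def
  have h2c : ∀ t, Real.exp (ν * t) * f t - c2 * Real.exp (2 * ν * t) = c1 := by
    intro t
    have hc : Real.exp (ν * t) * f t - c2 * Real.exp (2 * ν * t)
        = Real.exp (ν * 0) * f 0 - c2 * Real.exp (2 * ν * 0) :=
      is_const_of_deriv_eq_zero (fun x => (key2 x).differentiableAt)
        (fun x => (key2 x).deriv) t 0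
    rw [hc]; simp [hc1def]
  have hform : ∀ t, f t = c1 * Real.exp (-(ν * t)) + c2 * Real.exp (ν * t) := by
    intro t
    have h := h2c t
    have hee : Real.exp (2 * ν * t) = Real.exp (ν * t) * Real.exp (ν * t) := by
      rw [← Real.exp_add]; ring_nf
    rw [hee] at h
    have hx : Real.exp (ν * t) * Real.exp (-(ν * t)) = 1 := by
      rw [← Real.exp_add]; simp
    linear_combination Real.exp (-(ν * t)) * h + (c2 * Real.exp (ν * t) - f t) * hx
  have hsq : Tendsto (fun t => f t * Real.exp (-(ν * t))) atTop (nhds 0) := by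
    apply squeeze_zero_norm' (a := fun t => K * Real.exp (-((ν - a) * t)))
      ?_ (exp_decay_tendsto K (ν - a) (by linarith))
    filter_upwards [eventually_ge_atTop (0 : ℝ)] with t ht
    have hb := hbd t
    rw [Real.norm_eq_abs, abs_mul, Real.abs_exp]
    calc |f t| * Real.exp (-(ν * t))
        ≤ (K * Real.exp (a * |t|)) * Real.exp (-(ν * t)) := by
          exact mul_le_mul_of_nonneg_right hb (Real.exp_pos _).le
      _ = K * Real.exp (-((ν - a) * t)) := by
          rw [abs_of_nonneg ht, mul_assoc, ← Real.exp_add]; ring_nf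
  have hc20 : c2 = 0 := by
    have hG : (fun t => f t * Real.exp (-(ν * t)))
        = fun t => c1 * Real.exp (-(2 * ν * t)) + c2 := by
      funext t
      rw [hform t, show -(2 * ν * t) = (-(ν * t)) + (-(ν * t)) by ring, Real.exp_add]
      have hx : Real.exp (ν * t) * Real.exp (-(ν * t)) = 1 := by
        rw [← Real.exp_add]; simp
      linear_combination c2 * hx
    have hlim2 : Tendsto (fun t => f t * Real.exp (-(ν * t))) atTop (nhds c2) := by
      rw [hG]
      simpa using (exp_decay_tendsto c1 (2 * ν) (by linarith)).add
        (tendsto_const_nhds (x := c2) (f := atTop))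
    exact tendsto_nhds_unique hlim2 hsq
  have hc10 : c1 = 0 := by
    have hG : (fun t => f (-t) * Real.exp (-(ν * t))) = fun _ : ℝ => c1 := by
      funext t
      rw [hform (-t), hc20]
      simp only [zero_mul, add_zero, mul_neg, neg_neg]
      rw [mul_assoc, ← Real.exp_add]
      norm_num
    have hsq2 : Tendsto (fun t => f (-t) * Real.exp (-(ν * t))) atTop (nhds 0) := by
      apply squeeze_zero_norm' (a := fun t => K * Real.exp (-((ν - a) * t)))
        ?_ (exp_decay_tendsto K (ν - a) (by linarith))
      filter_upwards [eventually_ge_atTop (0 : ℝ)] with t ht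
      have hb := hbd (-t)
      rw [Real.norm_eq_abs, abs_mul, Real.abs_exp]
      calc |f (-t)| * Real.exp (-(ν * t))
          ≤ (K * Real.exp (a * |(-t)|)) * Real.exp (-(ν * t)) := by
            exact mul_le_mul_of_nonneg_right hb (Real.exp_pos _).le
        _ = K * Real.exp (-((ν - a) * t)) := by
            rw [abs_neg, abs_of_nonneg ht, mul_assoc, ← Real.exp_add]; ring_nf
    have : Tendsto (fun t => f (-t) * Real.exp (-(ν * t))) atTop (nhds c1) := by
      rw [hG]; exact tendsto_const_nhds
    exact tendsto_nhds_unique this hsq2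
  intro t
  rw [hform t, hc10, hc20]
  ring

lemma cosh_rpow_bound (δ t : ℝ) :
    (Real.cosh t) ^ (-δ) ≤ 2 ^ |δ| * Real.exp (|δ| * |t|) := by
  have hc1 : Real.exp |t| / 2 ≤ Real.cosh t := by
    rw [Real.cosh_eq]
    rcases abs_choice t with h | h <;> rw [h] <;>
      nlinarith [Real.exp_pos t, Real.exp_pos (-t)]
  have hc2 : Real.cosh t ≤ Real.exp |t| := by
    rw [Real.cosh_eq]
    have h1 : Real.exp t ≤ Real.exp |t| := Real.exp_le_exp.mpr (le_abs_self t)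
    have h2 : Real.exp (-t) ≤ Real.exp |t| := Real.exp_le_exp.mpr (neg_le_abs t)
    linarith
  rcases le_or_gt 0 δ with h | h
  · have hstep : (Real.cosh t) ^ (-δ) ≤ (Real.exp |t| / 2) ^ (-δ) :=
      Real.rpow_le_rpow_of_nonpos (by positivity) hc1 (by linarith)
    have heq : (Real.exp |t| / 2) ^ (-δ) = Real.exp (-δ * |t|) * 2 ^ δ := by
      rw [Real.div_rpow (Real.exp_pos _).le (by norm_num), ← Real.exp_mul,
        Real.rpow_neg (by norm_num : (0:ℝ) ≤ 2), div_inv_eq_mul]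
      ring_nf
    have h1 : Real.exp (-δ * |t|) ≤ Real.exp (|δ| * |t|) := by
      apply Real.exp_le_exp.mpr
      have : -δ ≤ |δ| := neg_le_abs δ
      nlinarith [abs_nonneg t]
    have h2 : (2:ℝ) ^ δ ≤ 2 ^ |δ| :=
      Real.rpow_le_rpow_of_exponent_le (by norm_num) (le_abs_self δ)
    calc (Real.cosh t) ^ (-δ) ≤ Real.exp (-δ * |t|) * 2 ^ δ := heq ▸ hstep
      _ ≤ Real.exp (|δ| * |t|) * 2 ^ |δ| := by
          apply mul_le_mul h1 h2 (by positivity) (by positivity)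
      _ = 2 ^ |δ| * Real.exp (|δ| * |t|) := by ring
  · have hstep : (Real.cosh t) ^ (-δ) ≤ (Real.exp |t|) ^ (-δ) :=
      Real.rpow_le_rpow (Real.cosh_pos t).le hc2 (by linarith)
    have heq : (Real.exp |t|) ^ (-δ) = Real.exp (|δ| * |t|) := by
      rw [← Real.exp_mul, abs_of_neg h]; ring_nf
    have h2 : (1:ℝ) ≤ 2 ^ |δ| := Real.one_le_rpow (by norm_num) (abs_nonneg δ)
    calc (Real.cosh t) ^ (-δ) ≤ Real.exp (|δ| * |t|) := heq ▸ hstep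
      _ ≤ 2 ^ |δ| * Real.exp (|δ| * |t|) := by nlinarith [Real.exp_pos (|δ| * |t|)]

/-- Uniqueness for the limit problem on the whole cylinder ℝ × S^{n-1}:
a global solution of ∂²_t w + (n-2k+1)/(n-1) Δ_θ w - (n-2k)²/(2k) w = 0 with
|w| ≤ C (cosh t)^{-δ} vanishes identically. Δ_θ is modeled by a symmetric
operator with eigenvalues -j(j+n-2) whose eigenvectors span a dense subspace. -/
theorem stmt_10 (n k : ℕ) (h2 : 2 ≤ 2 * k) (hkn : 2 * k < n) (δ : ℝ)
    (hδ₁ : -(((n : ℝ) - 2 * k) / (2 * k)) < δ) (hδ₂ : δ < ((n : ℝ) - 2 * k) / (2 * k))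
    {H : Type*} [NormedAddCommGroup H] [InnerProductSpace ℝ H]
    (Δθ : H →ₗ[ℝ] H) (hsym : Δθ.IsSymmetric)
    (hspec : ∀ (μ : ℝ) (e : H), e ≠ 0 → Δθ e = μ • e →
        ∃ j : ℕ, μ = -((j : ℝ) * ((j : ℝ) + n - 2)))
    (hdense : Dense (↑(Submodule.span ℝ {e : H | ∃ a : ℝ, Δθ e = a • e}) : Set H))
    (w : ℝ → H) (hw : ContDiff ℝ 2 w)
    (C : ℝ) (hC : 0 < C)
    (heq : ∀ t : ℝ,
      deriv (deriv w) t
        + (((n : ℝ) - 2 * k + 1) / ((n : ℝ) - 1)) • Δθ (w t)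
        - (((n : ℝ) - 2 * k) ^ 2 / (2 * k)) • w t = 0)
    (hbd : ∀ t : ℝ, ‖w t‖ ≤ C * (Real.cosh t) ^ (-δ)) :
    ∀ t : ℝ, w t = 0 := by
  -- numeric facts
  have hk1 : (1 : ℝ) ≤ (k : ℝ) := by
    have : 1 ≤ k := by omega
    exact_mod_cast this
  have hnk : (1 : ℝ) ≤ (n : ℝ) - 2 * k := by
    have h' : 2 * k + 1 ≤ n := by omega
    have := (Nat.cast_le (α := ℝ)).mpr h'
    push_cast at this
    linarith
  have hn3 : (3 : ℝ) ≤ (n : ℝ) := by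
    have : 3 ≤ n := by omega
    exact_mod_cast this
  set b : ℝ := ((n : ℝ) - 2 * k) ^ 2 / (2 * k) with hbdef
  set c : ℝ := ((n : ℝ) - 2 * k + 1) / ((n : ℝ) - 1) with hcdef
  have hbpos : 0 < b := by
    apply div_pos (by nlinarith) (by linarith)
  have hcpos : 0 ≤ c := by
    apply div_nonneg (by linarith) (by linarith)
  have hδm : |δ| < ((n : ℝ) - 2 * k) / (2 * k) := abs_lt.mpr ⟨hδ₁, hδ₂⟩
  have hδb : |δ| ^ 2 < b := by
    have hm : (((n : ℝ) - 2 * k) / (2 * k)) ^ 2 ≤ b := by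
      rw [hbdef, div_pow]
      apply div_le_div_of_nonneg_left (by nlinarith) (by linarith) ?_
      nlinarith
    have h0 : 0 ≤ |δ| := abs_nonneg δ
    nlinarith
  -- differentiability of w
  have hw1 : Differentiable ℝ w := hw.differentiable (by norm_num)
  have hw2 : Differentiable ℝ (deriv w) := by
    have h21 : ContDiff ℝ ((1 : ℕ) + 1) w := by exact_mod_cast hw
    exact ((contDiff_succ_iff_deriv.mp h21).2.2).differentiable (by norm_num)
  -- orthogonality to every eigenvector
  have horth : ∀ t : ℝ, ∀ e ∈ {e : H | ∃ a : ℝ, Δθ e = a • e},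
      inner ℝ e (w t) = (0 : ℝ) := by
    intro t e he
    obtain ⟨μ, hμ⟩ := he
    by_cases he0 : e = 0
    · simp [he0]
    · obtain ⟨j, hj⟩ := hspec μ e he0 hμ
      have hμ0 : μ ≤ 0 := by
        rw [hj]
        have hj0 : (0 : ℝ) ≤ (j : ℝ) := Nat.cast_nonneg j
        nlinarith
      set ν : ℝ := Real.sqrt (b - c * μ) with hνdef
      have hbc : 0 < b - c * μ := by nlinarith
      have hν2 : ν ^ 2 = b - c * μ := Real.sq_sqrt hbc.le
      have hνpos : 0 < ν := Real.sqrt_pos.mpr hbc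
      have hδν : |δ| < ν := by nlinarith [abs_nonneg δ]
      set L : H →L[ℝ] ℝ := innerSL ℝ e with hLdef
      set f : ℝ → ℝ := fun s => L (w s) with hfdef
      have hfd1 : ∀ s, HasDerivAt f (L (deriv w s)) s := fun s =>
        L.hasFDerivAt.comp_hasDerivAt s (hw1 s).hasDerivAt
      have hderf : deriv f = fun s => L (deriv w s) := funext fun s => (hfd1 s).deriv
      have hfd2 : ∀ s, HasDerivAt (fun u => L (deriv w u)) (L (deriv (deriv w) s)) s :=
        fun s => L.hasFDerivAt.comp_hasDerivAt s (hw2 s).hasDerivAt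
      have hf1 : Differentiable ℝ f := fun s => (hfd1 s).differentiableAt
      have hf2 : Differentiable ℝ (deriv f) := by
        rw [hderf]; exact fun s => (hfd2 s).differentiableAt
      have hode : ∀ s, deriv (deriv f) s = ν ^ 2 * f s := by
        intro s
        have hD : deriv (deriv f) s = L (deriv (deriv w) s) := by
          rw [hderf]; exact (hfd2 s).deriv
        have hE : deriv (deriv w) s = b • w s - c • Δθ (w s) := by
          have h := heq s
          rw [← sub_eq_zero, ← h]
          abel
        have hinner : L (Δθ (w s)) = μ * f s := by
          have h1 : (inner ℝ e (Δθ (w s)) : ℝ) = inner ℝ (Δθ e) (w s) := (hsym e (w s)).symm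
          have h2 : (inner ℝ (Δθ e) (w s) : ℝ) = μ * inner ℝ e (w s) := by
            rw [hμ, real_inner_smul_left]
          simp only [hLdef, hfdef, innerSL_apply_apply]
          rw [h1, h2]
        rw [hD, hE]
        rw [map_sub, map_smul, map_smul]
        simp only [smul_eq_mul]
        rw [hinner, hν2]
        simp only [hfdef]
        ring
      have hKbd : ∀ s, |f s| ≤ (C * ‖e‖ * 2 ^ |δ|) * Real.exp (|δ| * |s|) := by
        intro s
        have h1 : |f s| ≤ ‖e‖ * ‖w s‖ := by
          simpa [hLdef, hfdef] using abs_real_inner_le_norm e (w s)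
        have h2 : ‖w s‖ ≤ C * (Real.cosh s) ^ (-δ) := hbd s
        have h3 : (Real.cosh s) ^ (-δ) ≤ 2 ^ |δ| * Real.exp (|δ| * |s|) :=
          cosh_rpow_bound δ s
        calc |f s| ≤ ‖e‖ * ‖w s‖ := h1
          _ ≤ ‖e‖ * (C * (Real.cosh s) ^ (-δ)) :=
              mul_le_mul_of_nonneg_left h2 (norm_nonneg e)
          _ ≤ ‖e‖ * (C * (2 ^ |δ| * Real.exp (|δ| * |s|))) := by
              apply mul_le_mul_of_nonneg_left _ (norm_nonneg e)
              exact mul_le_mul_of_nonneg_left h3 hC.le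
          _ = (C * ‖e‖ * 2 ^ |δ|) * Real.exp (|δ| * |s|) := by ring
      have hzero := ode_zero ν |δ| (C * ‖e‖ * 2 ^ |δ|) hνpos (abs_nonneg δ) hδν
        f hf1 hf2 hode hKbd
      have := hzero t
      simpa [hfdef, hLdef] using this
  -- density argument
  intro t
  have hsub : {e : H | ∃ a : ℝ, Δθ e = a • e} ⊆
      ↑(LinearMap.ker (innerSL ℝ (w t) : H →ₗ[ℝ] ℝ)) := by
    intro e he
    simp only [SetLike.mem_coe, LinearMap.mem_ker]
    have := horth t e he
    simp only [ContinuousLinearMap.coe_coe, innerSL_apply_apply] at *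
    rw [real_inner_comm]
    exact this
  have hspan : (↑(Submodule.span ℝ {e : H | ∃ a : ℝ, Δθ e = a • e}) : Set H) ⊆
      ↑(LinearMap.ker (innerSL ℝ (w t) : H →ₗ[ℝ] ℝ)) :=
    SetLike.coe_subset_coe.mpr (Submodule.span_le.mpr hsub)
  have hclosed : IsClosed (↑(LinearMap.ker (innerSL ℝ (w t) : H →ₗ[ℝ] ℝ)) : Set H) :=
    ContinuousLinearMap.isClosed_ker _
  have huniv : (Set.univ : Set H) ⊆ ↑(LinearMap.ker (innerSL ℝ (w t) : H →ₗ[ℝ] ℝ)) := by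
    rw [← hdense.closure_eq]
    exact closure_minimal hspan hclosed
  have hself : (inner ℝ (w t) (w t) : ℝ) = 0 := by
    have := huniv (Set.mem_univ (w t))
    simpa using this
  exact inner_self_eq_zero.mp hself
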